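/- Let C be a small category with a coverage τ. The site (C,τ) is closed if and only if the class of τ-local epimorphisms in Ĉ is stable under composition (i.e., for all τ-local epimorphisms g : Z → Y and f : Y → X, the composite f ∘ g is a τ-local epimorphism). -/

import Mathlib

universe u

open CategoryTheory CategoryTheory.Limits Opposite

/-- A family of morphisms `{fᵢ : cᵢ ⟶ c}` indexed by a (small) set. -/
structure CoverFamily (C : Type u) [CategoryTheory.SmallCategory C] (c : C) : Type (u + 1) where
  ι : Type u
  obj : ι → C
  map : ∀ i : ι, obj i ⟶ c

/-- A coverage (Grothendieck pretopology) in the sense of the paper: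
identity families are coverings, and coverings admit weak pullbacks. -/
structure PaperCoverage (C : Type u) [CategoryTheory.SmallCategory C] : Type (u + 1) where
  covers : ∀ c : C, Set (CoverFamily C c)
  id_mem : ∀ c : C, (⟨PUnit, fun _ => c, fun _ => 𝟙 c⟩ : CoverFamily C c) ∈ covers c
  pullback_compat : ∀ {c c' : C} (g : c' ⟶ c) (fam : CoverFamily C c), fam ∈ covers c →
    ∃ fam' ∈ covers c', ∀ j : fam'.ι, ∃ (i : fam.ι) (h : fam'.obj j ⟶ fam.obj i),
      h ≫ fam.map i = fam'.map j ≫ g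

variable {C : Type u} [SmallCategory C]

/-- A morphism `π : Y ⟶ X` of presheaves is a `τ`-local epimorphism if every
morphism `y(c) ⟶ X` admits local lifts through `π` along some covering family of `c`. -/
def IsLocalEpi (τ : PaperCoverage C) {Y X : Cᵒᵖ ⥤ Type u} (π : Y ⟶ X) : Prop :=
  ∀ (c : C) (φ : yoneda.obj c ⟶ X),
    ∃ fam ∈ τ.covers c, ∀ j : fam.ι,
      ∃ φj : yoneda.obj (fam.obj j) ⟶ Y, φj ≫ π = yoneda.map (fam.map j) ≫ φ

/-- The site `(C,τ)` is closed: refinements of coverings by coverings are refined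
by a single covering whose members factor through the composites. -/
def PaperCoverage.IsClosed (τ : PaperCoverage C) : Prop :=
  ∀ (c : C) (fam : CoverFamily C c), fam ∈ τ.covers c →
    ∀ (sub : ∀ i : fam.ι, CoverFamily C (fam.obj i)),
      (∀ i : fam.ι, sub i ∈ τ.covers (fam.obj i)) →
      ∃ fam' ∈ τ.covers c, ∀ k : fam'.ι,
        ∃ (i : fam.ι) (j : (sub i).ι) (h : fam'.obj k ⟶ (sub i).obj j),
          h ≫ ((sub i).map j ≫ fam.map i) = fam'.map k

def toHom {F : Cᵒᵖ ⥤ Type u} {c : C} (x : F.obj (op c)) : yoneda.obj c ⟶ F where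
  app d := TypeCat.ofHom fun g => F.map g.op x
  naturality d d' f := by
    ext g
    show F.map (f.unop ≫ g).op x = F.map f (F.map g.op x)
    rw [op_comp, F.map_comp]
    rfl

@[simp] lemma toHom_app {F : Cᵒᵖ ⥤ Type u} {c : C} (x : F.obj (op c)) (d : Cᵒᵖ)
    (g : (yoneda.obj c).obj d) : (toHom x).app d g = F.map g.op x := rfl

lemma eq_toHom {F : Cᵒᵖ ⥤ Type u} {c : C} (φ : yoneda.obj c ⟶ F) :
    φ = toHom (φ.app (op c) (𝟙 c)) := by
  ext d g
  have := types_congr_hom (φ.naturality g.op) (𝟙 c)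
  simp at this
  simp only [toHom_app]
  exact this

lemma toHom_comp {F G : Cᵒᵖ ⥤ Type u} {c : C} (x : F.obj (op c)) (π : F ⟶ G) :
    toHom x ≫ π = toHom (π.app (op c) x) := by
  ext d g
  exact types_congr_hom (π.naturality g.op) x

lemma yoneda_map_comp_toHom {F : Cᵒᵖ ⥤ Type u} {c c' : C} (k : c' ⟶ c) (x : F.obj (op c)) :
    yoneda.map k ≫ toHom x = toHom (F.map k.op x) := by
  ext d g
  show F.map (g ≫ k).op x = F.map g.op (F.map k.op x)
  rw [op_comp, F.map_comp]
  rfl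

abbrev sigmaYoneda {ι : Type u} (o : ι → C) : Cᵒᵖ ⥤ Type u where
  obj d := Σ i : ι, (unop d ⟶ o i)
  map f := TypeCat.ofHom fun x => ⟨x.1, f.unop ≫ x.2⟩
  map_id d := by ext x <;> simp
  map_comp f g := by ext x <;> simp

/-- The site `(C,τ)` is closed if and only if the τ-local epimorphisms
in `Ĉ` are stable under composition. -/
theorem isClosed_iff_localEpi_comp_stable (τ : PaperCoverage C) :
    τ.IsClosed ↔
      ∀ {X Y Z : Cᵒᵖ ⥤ Type u} (g : Z ⟶ Y) (f : Y ⟶ X),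
        IsLocalEpi τ g → IsLocalEpi τ f → IsLocalEpi τ (g ≫ f) := by
  constructor
  · -- closed → stable
    intro hcl X Y Z g f hg hf c φ
    obtain ⟨fam, hfam, hlift⟩ := hf c φ
    choose φi hφi using hlift
    have hlift2 : ∀ i : fam.ι, ∃ s ∈ τ.covers (fam.obj i), ∀ j : s.ι,
        ∃ ψ : yoneda.obj (s.obj j) ⟶ Z, ψ ≫ g = yoneda.map (s.map j) ≫ φi i :=
      fun i => hg (fam.obj i) (φi i)
    choose sub hsub hψ' using hlift2
    choose ψ hψ using hψ'
    obtain ⟨fam', hfam', hfact⟩ := hcl c fam hfam sub hsub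
    refine ⟨fam', hfam', fun k => ?_⟩
    obtain ⟨i, j, h, hh⟩ := hfact k
    refine ⟨yoneda.map h ≫ ψ i j, ?_⟩
    rw [Category.assoc, ← Category.assoc (ψ i j), hψ i j, Category.assoc, hφi i, ← hh]
    simp
  · -- stable → closed
    intro hcomp c fam hfam sub hsub
    let YP : Cᵒᵖ ⥤ Type u := sigmaYoneda fam.obj
    let ZP : Cᵒᵖ ⥤ Type u := sigmaYoneda (fun p : Σ i : fam.ι, (sub i).ι => (sub p.1).obj p.2)
    let π2 : YP ⟶ yoneda.obj c :=
      { app := fun d => TypeCat.ofHom fun (x : Σ i : fam.ι, (unop d ⟶ fam.obj i)) => x.2 ≫ fam.map x.1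
        naturality := fun d d' u => by ext x; exact Category.assoc _ _ _ }
    let π1 : ZP ⟶ YP :=
      { app := fun d => TypeCat.ofHom fun (x : Σ p : (Σ i : fam.ι, (sub i).ι), (unop d ⟶ (sub p.1).obj p.2)) =>
          (⟨x.1.1, x.2 ≫ (sub x.1.1).map x.1.2⟩ : Σ i : fam.ι, (unop d ⟶ fam.obj i))
        naturality := fun d d' u => by ext x; exacts [rfl, heq_of_eq (Category.assoc u.unop x.2 ((sub x.1.1).map x.1.2))] }
    have hπ2 : IsLocalEpi τ π2 := by
      intro c' φ
      obtain ⟨fam', hf', hfac⟩ := τ.pullback_compat (φ.app (op c') (𝟙 c')) fam hfam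
      refine ⟨fam', hf', fun j => ?_⟩
      obtain ⟨i, h, hh⟩ := hfac j
      refine ⟨toHom (⟨i, h⟩ : YP.obj (op (fam'.obj j))), ?_⟩
      rw [toHom_comp]
      conv_rhs => rw [eq_toHom φ]
      rw [yoneda_map_comp_toHom]
      exact congrArg toHom hh
    have hπ1 : IsLocalEpi τ π1 := by
      intro c' φ
      obtain ⟨fam', hf', hfac⟩ :=
        τ.pullback_compat (φ.app (op c') (𝟙 c')).2 (sub (φ.app (op c') (𝟙 c')).1)
          (hsub _)
      refine ⟨fam', hf', fun j => ?_⟩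
      obtain ⟨i0, h, hh⟩ := hfac j
      refine ⟨toHom (⟨⟨(φ.app (op c') (𝟙 c')).1, i0⟩, h⟩ : ZP.obj (op (fam'.obj j))), ?_⟩
      rw [toHom_comp]
      conv_rhs => rw [eq_toHom φ]
      rw [yoneda_map_comp_toHom]
      refine congrArg toHom ?_
      show (⟨(φ.app (op c') (𝟙 c')).1, h ≫ (sub _).map i0⟩ : YP.obj (op (fam'.obj j)))
        = ⟨(φ.app (op c') (𝟙 c')).1, fam'.map j ≫ (φ.app (op c') (𝟙 c')).2⟩
      rw [hh]
    obtain ⟨fam', hf', hl⟩ := hcomp π1 π2 hπ1 hπ2 c (𝟙 (yoneda.obj c))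
    refine ⟨fam', hf', fun k => ?_⟩
    obtain ⟨φk, hφk⟩ := hl k
    set x := φk.app (op (fam'.obj k)) (𝟙 (fam'.obj k)) with hx
    refine ⟨x.1.1, x.1.2, x.2, ?_⟩
    have := types_congr_hom (NatTrans.congr_app hφk (op (fam'.obj k))) (𝟙 (fam'.obj k))
    simp [π1, π2, ← hx] at this
    simpa [TypeCat.Fun.mk_apply] using this
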